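/- Let N = {v ∈ ℂ² ∖ {0} : v₀² + v₁² = 0} be the punctured null cone of the complex quadratic form v₀² + v₁². Then N is closed in the subspace ℂ² ∖ {0}, N is invariant under scalar multiplication by ℂˣ, N is invariant under every matrix g ∈ SL(2,ℂ) satisfying gᵀ g = 1 (i.e. under SO(2,ℂ)), and yet N is NOT preconnected. -/
import Mathlib


open Matrix

/-- The punctured null cone `N = {v ∈ ℂ² ∖ {0} : v₀² + v₁² = 0}` is closed in
the subspace `ℂ² ∖ {0}`, stable under `ℂˣ` and under `SO(2,ℂ) ⊂ SL(2,ℂ)`,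
but NOT preconnected (Remark 2.4). -/
theorem null_cone_not_preconnected :
    IsClosed ((Subtype.val ⁻¹' {v : Fin 2 → ℂ | v 0 ^ 2 + v 1 ^ 2 = 0}) :
        Set {v : Fin 2 → ℂ // v ≠ 0}) ∧
    (∀ (l : ℂˣ), ∀ v ∈ {v : Fin 2 → ℂ | v ≠ 0 ∧ v 0 ^ 2 + v 1 ^ 2 = 0},
        (l : ℂ) • v ∈ {v : Fin 2 → ℂ | v ≠ 0 ∧ v 0 ^ 2 + v 1 ^ 2 = 0}) ∧
    (∀ (g : Matrix.SpecialLinearGroup (Fin 2) ℂ),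
        (g : Matrix (Fin 2) (Fin 2) ℂ)ᵀ * (g : Matrix (Fin 2) (Fin 2) ℂ) = 1 →
        ∀ v ∈ {v : Fin 2 → ℂ | v ≠ 0 ∧ v 0 ^ 2 + v 1 ^ 2 = 0},
          (g : Matrix (Fin 2) (Fin 2) ℂ) *ᵥ v
            ∈ {v : Fin 2 → ℂ | v ≠ 0 ∧ v 0 ^ 2 + v 1 ^ 2 = 0}) ∧
    ¬ IsPreconnected {v : Fin 2 → ℂ | v ≠ 0 ∧ v 0 ^ 2 + v 1 ^ 2 = 0} := by
  refine ⟨?_, ?_, ?_, ?_⟩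
  · -- closed
    have hc : Continuous fun v : Fin 2 → ℂ => v 0 ^ 2 + v 1 ^ 2 :=
      ((continuous_apply 0).pow 2).add ((continuous_apply 1).pow 2)
    exact (isClosed_singleton.preimage hc).preimage continuous_subtype_val
  · -- scalar invariance
    rintro l v ⟨hv0, hv⟩
    refine ⟨smul_ne_zero l.ne_zero hv0, ?_⟩
    · simp only [Pi.smul_apply, smul_eq_mul]
      ring_nf
      ring_nf at hv
      linear_combination (l : ℂ) ^ 2 * hv
  · -- SO(2) invariance
    rintro g hg v ⟨hv0, hv⟩
    constructor
    · intro h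
      apply hv0
      have : (g : Matrix (Fin 2) (Fin 2) ℂ)ᵀ *ᵥ ((g : Matrix (Fin 2) (Fin 2) ℂ) *ᵥ v) = v := by
        rw [Matrix.mulVec_mulVec, hg, Matrix.one_mulVec]
      rw [h, Matrix.mulVec_zero] at this
      exact this.symm
    · have h00 := congr_fun (congr_fun hg 0) 0
      have h01 := congr_fun (congr_fun hg 0) 1
      have h11 := congr_fun (congr_fun hg 1) 1
      simp [Matrix.mul_apply, Matrix.transpose_apply, Fin.sum_univ_two,
        Matrix.one_apply] at h00 h01 h11
      show ((g : Matrix (Fin 2) (Fin 2) ℂ) *ᵥ v) 0 ^ 2 +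
          ((g : Matrix (Fin 2) (Fin 2) ℂ) *ᵥ v) 1 ^ 2 = 0
      simp only [Matrix.mulVec, dotProduct, Fin.sum_univ_two]
      linear_combination (v 0 ^ 2) * h00 + (v 1 ^ 2) * h11 +
        (2 * v 0 * v 1) * h01 + hv
  · -- not preconnected
    intro hpc
    set N := {v : Fin 2 → ℂ | v ≠ 0 ∧ v 0 ^ 2 + v 1 ^ 2 = 0}
    have hU : IsOpen {v : Fin 2 → ℂ | v 1 ≠ Complex.I * v 0} := by
      have : Continuous fun v : Fin 2 → ℂ => v 1 - Complex.I * v 0 :=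
        (continuous_apply 1).sub (continuous_const.mul (continuous_apply 0))
      have := isClosed_singleton (x := (0 : ℂ)) |>.preimage this
      convert this.isOpen_compl using 1
      ext v; simp [sub_eq_zero]
    have hV : IsOpen {v : Fin 2 → ℂ | v 1 ≠ -Complex.I * v 0} := by
      have : Continuous fun v : Fin 2 → ℂ => v 1 + Complex.I * v 0 :=
        (continuous_apply 1).add (continuous_const.mul (continuous_apply 0))
      have := isClosed_singleton (x := (0 : ℂ)) |>.preimage this
      convert this.isOpen_compl using 1
      ext v; simp [neg_mul, eq_neg_iff_add_eq_zero]
    have hsub : N ⊆ {v : Fin 2 → ℂ | v 1 ≠ Complex.I * v 0} ∪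
        {v : Fin 2 → ℂ | v 1 ≠ -Complex.I * v 0} := by
      rintro v ⟨hv0, hv⟩
      by_contra h
      simp only [Set.mem_union, Set.mem_setOf_eq, not_or, not_not] at h
      obtain ⟨h1, h2⟩ := h
      have hv00 : v 0 = 0 := by
        have := h1.symm.trans h2
        have h2I : (2 : ℂ) * Complex.I * v 0 = 0 := by linear_combination this
        have : Complex.I * v 0 = 0 := by linear_combination h2I / 2
        rcases mul_eq_zero.mp this with h | h
        · exact absurd h Complex.I_ne_zero
        · exact h
      have hv10 : v 1 = 0 := by rw [h1, hv00, mul_zero]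
      apply hv0
      funext i
      fin_cases i <;> simpa
    have ha : (![1, Complex.I] : Fin 2 → ℂ) ∈ N ∩
        {v : Fin 2 → ℂ | v 1 ≠ -Complex.I * v 0} := by
      refine ⟨⟨?_, ?_⟩, ?_⟩
      · intro h
        have := congr_fun h 0
        simp at this
      · simp [Complex.I_sq]
      · simp only [Set.mem_setOf_eq]
        intro h
        simp only [Matrix.cons_val_one, Matrix.head_cons, Matrix.cons_val_zero,
          mul_one] at h
        have : (2 : ℂ) * Complex.I = 0 := by linear_combination h
        simp [Complex.I_ne_zero] at this
    have hb : (![1, -Complex.I] : Fin 2 → ℂ) ∈ N ∩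
        {v : Fin 2 → ℂ | v 1 ≠ Complex.I * v 0} := by
      refine ⟨⟨?_, ?_⟩, ?_⟩
      · intro h
        have := congr_fun h 0
        simp at this
      · simp [Complex.I_sq]
      · simp only [Set.mem_setOf_eq]
        intro h
        simp only [Matrix.cons_val_one, Matrix.head_cons, Matrix.cons_val_zero,
          mul_one] at h
        have : (2 : ℂ) * Complex.I = 0 := by linear_combination -h
        simp [Complex.I_ne_zero] at this
    obtain ⟨w, hwN, hw1, hw2⟩ :=
      hpc _ _ hU hV hsub ⟨_, hb.1, hb.2⟩ ⟨_, ha.1, ha.2⟩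
    obtain ⟨hw0, hwq⟩ := hwN
    have hfac : (w 1 - Complex.I * w 0) * (w 1 + Complex.I * w 0) = 0 := by
      have : Complex.I ^ 2 = -1 := Complex.I_sq
      linear_combination hwq - w 0 ^ 2 * this
    rcases mul_eq_zero.mp hfac with h | h
    · exact hw1 (by linear_combination h)
    · exact hw2 (by linear_combination h)
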